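/- arXiv:1703.10414 — 5 statements merged into one kernel-verified Lean document; each statement's English description precedes it below -/
import Mathlib

section
/- The space 𝔈 is complete with respect to the pseudometric d_acs: for every family of matrix sequences ({B_{n,m}}_n)_{m≥1} that is Cauchy with respect to d_acs (i.e., for every ε > 0 there is M such that d_acs({B_{n,s}}_n, {B_{n,t}}_n) < ε for all s, t ≥ M), there exists a matrix sequence {A_n} ∈ 𝔈 such that d_acs({B_{n,m}}_n, {A_n}) → 0 as m → ∞. -/
open MeasureTheory Filter
open scoped ENNReal NNReal

/-- The singular values of a complex square matrix, arranged in non-increasing order: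
`sv A 0 = σ₁(A) ≥ sv A 1 = σ₂(A) ≥ …` (the square roots of the eigenvalues of `Aᴴ * A`). -/
noncomputable def sv {n : ℕ} (A : Matrix (Fin n) (Fin n) ℂ) : Fin n → ℝ :=
  fun i =>
    (fun j => Real.sqrt ((Matrix.isHermitian_conjTranspose_mul_self A).eigenvalues j))
      (Tuple.sort (fun j => Real.sqrt ((Matrix.isHermitian_conjTranspose_mul_self A).eigenvalues j))
        i.rev)

/-- `p(A) := min_{1 ≤ i ≤ n} ((i-1)/n + σᵢ(A))` (here `i : Fin n` plays the role of `i-1`). -/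
noncomputable def pA {n : ℕ} (A : Matrix (Fin n) (Fin n) ℂ) : ℝ :=
  ⨅ i : Fin n, (((i : ℕ) : ℝ) / n + sv A i)

/-- `ρ({A_n}) := limsup_{n→∞} p(A_n)`, valued in `[0,∞]`. -/
noncomputable def rho (A : (n : ℕ) → Matrix (Fin n) (Fin n) ℂ) : ℝ≥0∞ :=
  Filter.limsup (fun n => ENNReal.ofReal (pA (A n))) Filter.atTop

/-- The a.c.s. pseudometric `d_acs({A_n},{B_n}) := ρ({A_n − B_n})`. -/
noncomputable def dacs (A B : (n : ℕ) → Matrix (Fin n) (Fin n) ℂ) : ℝ≥0∞ :=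
  rho (fun n => A n - B n)

/-- `{A_n} ∼_σ k` : the sequence `{A_n}` has spectral (singular value) symbol `k` on `D`. -/
def SpecSymb {d : ℕ} (D : Set (Fin d → ℝ)) (A : (n : ℕ) → Matrix (Fin n) (Fin n) ℂ)
    (k : (Fin d → ℝ) → ℂ) : Prop :=
  ∀ F : ℝ → ℂ, Continuous F → HasCompactSupport F →
    Filter.Tendsto (fun n : ℕ => (n : ℂ)⁻¹ * ∑ i : Fin n, F (sv (A n) i)) Filter.atTop
      (nhds ((volume D).toReal⁻¹ • ∫ x in D, F ‖k x‖))

/-- `p_m(f) := inf_{E ⊆ D measurable} ( |D∖E|/|D| + esssup_{x∈E} |f(x)| )`, valued in `[0,∞]`. -/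
noncomputable def pm {d : ℕ} (D : Set (Fin d → ℝ)) (f : (Fin d → ℝ) → ℂ) : ℝ≥0∞ :=
  ⨅ (E : Set (Fin d → ℝ)) (_ : MeasurableSet E) (_ : E ⊆ D),
    (volume (D \ E) / volume D + essSup (fun x => (‖f x‖₊ : ℝ≥0∞)) (volume.restrict E))

/-- `d_m(f,g) := p_m(f − g)`. -/
noncomputable def dm {d : ℕ} (D : Set (Fin d → ℝ)) (f g : (Fin d → ℝ) → ℂ) : ℝ≥0∞ :=
  pm D (fun x => f x - g x)

/-- A "group in 𝒞_D": a set `G` of pairs `({A_n}, k)` with `k` measurable and `{A_n} ∼_σ k`,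
closed under addition and negation. -/
def IsGroupIn {d : ℕ} (D : Set (Fin d → ℝ))
    (G : Set (((n : ℕ) → Matrix (Fin n) (Fin n) ℂ) × ((Fin d → ℝ) → ℂ))) : Prop :=
  (∀ p ∈ G, Measurable p.2 ∧ SpecSymb D p.1 p.2) ∧
  (∀ p ∈ G, ∀ q ∈ G, ((fun n => p.1 n + q.1 n), p.2 + q.2) ∈ G) ∧
  (∀ p ∈ G, ((fun n => -(p.1 n)), -p.2) ∈ G)

/-- `𝔈` is complete with respect to the pseudometric `d_acs`. -/
theorem dacs_complete (B : ℕ → (n : ℕ) → Matrix (Fin n) (Fin n) ℂ)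
    (hB : ∀ ε : ℝ≥0∞, 0 < ε → ∃ M : ℕ, ∀ s t : ℕ, M ≤ s → M ≤ t → dacs (B s) (B t) < ε) :
    ∃ A : (n : ℕ) → Matrix (Fin n) (Fin n) ℂ,
      Filter.Tendsto (fun m => dacs (B m) A) Filter.atTop (nhds 0) := by
  classical
  set ε : ℕ → ℝ≥0∞ := fun j => 2⁻¹ ^ j with hεdef
  have hεpos : ∀ j, 0 < ε j := fun j => ENNReal.pow_pos (by norm_num) j
  choose M0 hM0 using fun j => hB (ε j) (hεpos j)
  set M : ℕ → ℕ := fun j => j + ∑ i ∈ Finset.range (j + 1), M0 i with hMdef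
  have hM_ge : ∀ j, M0 j ≤ M j := fun j =>
    le_trans (Finset.single_le_sum (f := M0) (fun i _ => Nat.zero_le _)
      (Finset.self_mem_range_succ j)) (Nat.le_add_left _ _)
  have hM_mono : Monotone M := by
    intro a b hab
    exact Nat.add_le_add hab
      (Finset.sum_le_sum_of_subset (Finset.range_subset_range.2 (Nat.succ_le_succ hab)))
  have key : ∀ j k s, M j ≤ s → j ≤ k → dacs (B s) (B (M k)) < ε j := by
    intro j k s hs hjk
    exact hM0 j s (M k) (le_trans (hM_ge j) hs)
      (le_trans (hM_ge j) (hM_mono hjk))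
  have hQ : ∀ k, ∃ N, ∀ n, N ≤ n → ∀ s, s ≤ k → ∀ j, j ≤ k → M j ≤ s →
      ENNReal.ofReal (pA (B s n - B (M k) n)) < ε j := by
    intro k
    have hev : ∀ᶠ n in atTop, ∀ s ∈ Finset.range (k + 1), ∀ j ∈ Finset.range (k + 1),
        M j ≤ s → ENNReal.ofReal (pA (B s n - B (M k) n)) < ε j := by
      rw [Filter.eventually_all_finset]
      intro s hs
      rw [Filter.eventually_all_finset]
      intro j hj
      by_cases hms : M j ≤ s
      · have hlt : dacs (B s) (B (M k)) < ε j :=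
          key j k s hms (Nat.lt_succ_iff.mp (Finset.mem_range.mp hj))
        have h2 : ∀ᶠ n in atTop,
            ENNReal.ofReal (pA (B s n - B (M k) n)) < ε j := by
          have := Filter.eventually_lt_of_limsup_lt (by exact hlt)
          exact this
        filter_upwards [h2] with n hn _
        exact hn
      · filter_upwards with n hn
        exact absurd hn hms
    obtain ⟨N, hN⟩ := Filter.eventually_atTop.mp hev
    exact ⟨N, fun n hn s hs j hj hms =>
      hN n hn s (Finset.mem_range.mpr (Nat.lt_succ_of_le hs)) j
        (Finset.mem_range.mpr (Nat.lt_succ_of_le hj)) hms⟩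
  choose N0 hN0 using hQ
  set N : ℕ → ℕ := fun k => k + ∑ i ∈ Finset.range (k + 1), N0 i with hNdef
  have hN_ge : ∀ k, N0 k ≤ N k := fun k =>
    le_trans (Finset.single_le_sum (f := N0) (fun i _ => Nat.zero_le _)
      (Finset.self_mem_range_succ k)) (Nat.le_add_left _ _)
  have hN_self : ∀ k, k ≤ N k := fun k => Nat.le_add_right _ _
  set kOf : ℕ → ℕ := fun n => Nat.findGreatest (fun k => N k ≤ n) n with hkOf
  refine ⟨fun n => B (M (kOf n)) n, ?_⟩
  have main : ∀ j m, M j ≤ m → dacs (B m) (fun n => B (M (kOf n)) n) ≤ ε j := by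
    intro j m hjm
    have hev : ∀ᶠ n in atTop,
        ENNReal.ofReal (pA (B m n - B (M (kOf n)) n)) ≤ ε j := by
      rw [Filter.eventually_atTop]
      refine ⟨N (m + j + 1), fun n hn => ?_⟩
      set k0 : ℕ := m + j + 1 with hk0
      have hk0n : k0 ≤ n := le_trans (hN_self k0) hn
      have hk0le : k0 ≤ kOf n := Nat.le_findGreatest hk0n hn
      have hspec : N (kOf n) ≤ n :=
        Nat.findGreatest_spec (P := fun k => N k ≤ n) hk0n hn
      have hmk : m ≤ kOf n := le_trans (by omega) hk0le
      have hjk : j ≤ kOf n := le_trans (by omega) hk0le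
      exact le_of_lt (hN0 (kOf n) n (le_trans (hN_ge _) hspec) m hmk j hjk hjm)
    exact Filter.limsup_le_of_le (by isBoundedDefault) hev
  rw [ENNReal.tendsto_nhds_zero]
  intro δ hδ
  have htend : Filter.Tendsto (fun j : ℕ => (2⁻¹ : ℝ≥0∞) ^ j) atTop (nhds 0) :=
    ENNReal.tendsto_pow_atTop_nhds_zero_of_lt_one (by norm_num)
  have : ∀ᶠ j in atTop, (2⁻¹ : ℝ≥0∞) ^ j < δ := htend.eventually_lt_const hδ
  obtain ⟨j, hj⟩ := this.exists
  rw [Filter.eventually_atTop]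
  exact ⟨M j, fun m hm => le_trans (main j m hm) (le_of_lt hj)⟩
end

section
/- If a matrix sequence {A_n} ∈ 𝔈 has spectral symbol g (i.e., {A_n} ∼_σ g), then p_m(g) ≤ ρ({A_n}). -/
open MeasureTheory Filter
open scoped ENNReal NNReal

lemma sv_nonneg {n : ℕ} (A : Matrix (Fin n) (Fin n) ℂ) (i : Fin n) : 0 ≤ sv A i :=
  Real.sqrt_nonneg _

lemma sv_antitone {n : ℕ} (A : Matrix (Fin n) (Fin n) ℂ) : Antitone (sv A) := by
  intro i j hij
  exact Tuple.monotone_sort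
    (fun j => Real.sqrt ((Matrix.isHermitian_conjTranspose_mul_self A).eigenvalues j))
    (Fin.rev_le_rev.mpr hij)

lemma count_bound {n : ℕ} (A : Matrix (Fin n) (Fin n) ℂ) (i₀ : Fin n) (s : ℝ)
    (f : ℝ → ℝ) (hf1 : ∀ x, f x ≤ 1) (hfz : ∀ x ≤ s, f x = 0)
    (hsv : sv A i₀ ≤ s) : ∑ i, f (sv A i) ≤ (i₀ : ℕ) := by
  calc ∑ i, f (sv A i) ≤ ∑ i : Fin n, (if i < i₀ then (1:ℝ) else 0) := by
        apply Finset.sum_le_sum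
        intro i _
        by_cases hi : i < i₀
        · simp [hi, hf1]
        · simp only [hi, if_false]
          rw [hfz _ (le_trans (sv_antitone A (not_lt.mp hi)) hsv)]
    _ = (i₀ : ℕ) := by
        simp only [Finset.sum_boole, Nat.cast_inj]
        rw [show Finset.filter (fun x => x < i₀) Finset.univ = Finset.Iio i₀ by ext; simp]
        simp [Fin.card_Iio]

noncomputable def bump (s δ M : ℝ) : ℝ → ℝ :=
  fun x => max 0 (min (min ((x - s)/δ) 1) (M + 1 - x))

lemma bump_cont (s δ M : ℝ) : Continuous (bump s δ M) := by
  unfold bump; fun_prop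

lemma bump_nonneg (s δ M x : ℝ) : 0 ≤ bump s δ M x := le_max_left _ _

lemma bump_le_one (s δ M x : ℝ) : bump s δ M x ≤ 1 :=
  max_le zero_le_one (le_trans (min_le_left _ _) (min_le_right _ _))

lemma bump_zero_of_le (s δ M x : ℝ) (hδ : 0 < δ) (hx : x ≤ s) : bump s δ M x = 0 := by
  have h1 : (x - s)/δ ≤ 0 := div_nonpos_of_nonpos_of_nonneg (by linarith) hδ.le
  have : min (min ((x - s)/δ) 1) (M + 1 - x) ≤ 0 :=
    le_trans (min_le_left _ _) (le_trans (min_le_left _ _) h1)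
  exact max_eq_left this

lemma bump_zero_of_ge (s δ M x : ℝ) (hx : M + 1 ≤ x) : bump s δ M x = 0 := by
  have : min (min ((x - s)/δ) 1) (M + 1 - x) ≤ 0 :=
    le_trans (min_le_right _ _) (by linarith)
  exact max_eq_left this

lemma bump_one (s δ M x : ℝ) (hδ : 0 < δ) (h1 : s + δ ≤ x) (h2 : x ≤ M) :
    bump s δ M x = 1 := by
  have hu : (1:ℝ) ≤ (x - s)/δ := (one_le_div hδ).mpr (by linarith)
  have hv : (1:ℝ) ≤ M + 1 - x := by linarith
  rw [bump, min_eq_right hu, min_eq_left hv, max_eq_right zero_le_one]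

lemma bump_compactSupport (s δ M : ℝ) (hδ : 0 < δ) : HasCompactSupport (bump s δ M) := by
  apply HasCompactSupport.intro (isCompact_Icc (a := s) (b := M + 1))
  intro x hx
  simp only [Set.mem_Icc, not_and_or, not_le] at hx
  rcases hx with hx | hx
  · exact bump_zero_of_le s δ M x hδ hx.le
  · exact bump_zero_of_ge s δ M x hx.le

lemma le_of_tendsto_of_frequently_le' {u : ℕ → ℝ} {L c : ℝ}
    (h : Filter.Tendsto u Filter.atTop (nhds L)) (hf : ∃ᶠ n in Filter.atTop, u n ≤ c) :
    L ≤ c := by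
  by_contra hlt
  push_neg at hlt
  have hev : ∀ᶠ n in Filter.atTop, c < u n := h.eventually (eventually_gt_nhds hlt)
  rcases (hf.and_eventually hev).exists with ⟨n, h1, h2⟩
  linarith

lemma specSymb_real {d : ℕ} {D : Set (Fin d → ℝ)} {A : (n : ℕ) → Matrix (Fin n) (Fin n) ℂ}
    {g : (Fin d → ℝ) → ℂ} (h : SpecSymb D A g) (f : ℝ → ℝ) (hc : Continuous f)
    (hcs : HasCompactSupport f) :
    Tendsto (fun n : ℕ => (n : ℝ)⁻¹ * ∑ i : Fin n, f (sv (A n) i)) atTop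
      (nhds ((volume D).toReal⁻¹ * ∫ x in D, f ‖g x‖)) := by
  have hF := h (fun x => (f x : ℂ)) (Complex.continuous_ofReal.comp hc)
    (hcs.comp_left (g := fun x : ℝ => (x : ℂ)) rfl)
  have hre := (Complex.continuous_re.tendsto _).comp hF
  have heq : (fun n : ℕ => ((n : ℂ)⁻¹ * ∑ i : Fin n, ((f (sv (A n) i) : ℝ) : ℂ)).re)
      = fun n : ℕ => (n : ℝ)⁻¹ * ∑ i : Fin n, f (sv (A n) i) := by
    funext n
    have : ((n : ℂ)⁻¹ * ∑ i : Fin n, ((f (sv (A n) i) : ℝ) : ℂ))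
        = (((n : ℝ)⁻¹ * ∑ i : Fin n, f (sv (A n) i) : ℝ) : ℂ) := by
      push_cast
      ring
    rw [this, Complex.ofReal_re]
  have hlim : (((volume D).toReal⁻¹ : ℝ) • ∫ x in D, ((f ‖g x‖ : ℝ) : ℂ)).re
      = (volume D).toReal⁻¹ * ∫ x in D, f ‖g x‖ := by
    have : ∫ x in D, ((f ‖g x‖ : ℝ) : ℂ) = (((∫ x in D, f ‖g x‖ : ℝ)) : ℂ) :=
      integral_ofReal (𝕜 := ℂ)
    rw [this, Complex.real_smul, ← Complex.ofReal_mul, Complex.ofReal_re]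
  rw [← heq, ← hlim]
  exact hre

lemma setIntegral_ge {d : ℕ} {D : Set (Fin d → ℝ)} (hD : MeasurableSet D)
    (hDfin : volume D < ⊤) {g : (Fin d → ℝ) → ℂ} (hg : Measurable g)
    (f : ℝ → ℝ) (hc : Continuous f) (hf0 : ∀ x, 0 ≤ f x) (hf1 : ∀ x, f x ≤ 1)
    (S : Set (Fin d → ℝ)) (hS : MeasurableSet S) (hSD : S ⊆ D)
    (hone : ∀ x ∈ S, f ‖g x‖ = 1) :
    (volume S).toReal ≤ ∫ x in D, f ‖g x‖ := by
  haveI : IsFiniteMeasure (volume.restrict D) :=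
    ⟨by rwa [Measure.restrict_apply_univ]⟩
  have hmeas : Measurable (fun x => f ‖g x‖) := hc.measurable.comp hg.norm
  have hint : IntegrableOn (fun x => f ‖g x‖) D volume := by
    refine Integrable.mono' (integrable_const 1) hmeas.aestronglyMeasurable ?_
    refine Filter.Eventually.of_forall fun x => ?_
    rw [Real.norm_eq_abs, abs_of_nonneg (hf0 _)]
    exact hf1 _
  have hSfin : volume S < ⊤ := lt_of_le_of_lt (measure_mono hSD) hDfin
  have h1 : (volume S).toReal = ∫ _x in S, (1:ℝ) := by
    rw [setIntegral_const, smul_eq_mul, mul_one]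
    rfl
  have h2 : ∫ _x in S, (1:ℝ) ≤ ∫ x in S, f ‖g x‖ := by
    refine setIntegral_mono_on (integrableOn_const hSfin.ne)
      (hint.mono_set hSD) hS fun x hx => (hone x hx).ge
  have h3 : ∫ x in S, f ‖g x‖ ≤ ∫ x in D, f ‖g x‖ := by
    refine setIntegral_mono_set hint (Filter.Eventually.of_forall fun x => hf0 _)
      (HasSubset.Subset.eventuallyLE hSD)
  linarith

/-- if `{A_n} ∼_σ g` then `p_m(g) ≤ ρ({A_n})`. -/
theorem pm_le_rho {d : ℕ} (D : Set (Fin d → ℝ)) (hD : MeasurableSet D)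
    (hD0 : 0 < volume D) (hDfin : volume D < ⊤)
    (A : (n : ℕ) → Matrix (Fin n) (Fin n) ℂ)
    (g : (Fin d → ℝ) → ℂ) (hg : Measurable g)
    (h : SpecSymb D A g) : pm D g ≤ rho A := by
  classical
  by_cases htop : rho A = ⊤
  · exact htop ▸ le_top
  have hρ0 : (0:ℝ) ≤ (rho A).toReal := ENNReal.toReal_nonneg
  apply ENNReal.le_of_forall_pos_le_add
  intro η hη _
  set ρr : ℝ := (rho A).toReal with hρr
  set ε : ℝ := (η : ℝ) / 4 with hεdef
  have hε0 : 0 < ε := by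
    have : (0:ℝ) < (η:ℝ) := hη
    linarith
  set c : ℝ := ρr + ε with hcdef
  have hc0 : 0 < c := by linarith
  -- eventually there is a good index
  have hlimsup : rho A < ENNReal.ofReal c := by
    rw [hcdef, ENNReal.ofReal_add hρ0 hε0.le, ENNReal.ofReal_toReal htop]
    exact ENNReal.lt_add_right htop (by simp [ENNReal.ofReal_pos.mpr hε0, ne_of_gt])
  have hev0 : ∀ᶠ n in atTop, ENNReal.ofReal (pA (A n)) < ENNReal.ofReal c :=
    eventually_lt_of_limsup_lt hlimsup
  set P : ℕ → Prop := fun n => ∃ i : Fin n, ((i : ℕ) : ℝ) / n + sv (A n) i < c with hPdef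
  have hP : ∀ᶠ n in atTop, P n := by
    filter_upwards [hev0, eventually_ge_atTop 1] with n h1 h2
    have hlt : pA (A n) < c := (ENNReal.ofReal_lt_ofReal_iff hc0).mp h1
    have hne : Nonempty (Fin n) := ⟨⟨0, h2⟩⟩
    exact exists_lt_of_ciInf_lt hlt
  set t : ℕ → ℝ≥0∞ :=
    fun n => if hn : P n then ENNReal.ofReal (sv (A n) hn.choose) else 0 with htdef
  -- basic facts about the chosen witness
  have hwit : ∀ n (hn : P n),
      0 ≤ ((hn.choose : ℕ) : ℝ) / n ∧ 0 ≤ sv (A n) hn.choose ∧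
        ((hn.choose : ℕ) : ℝ) / n + sv (A n) hn.choose < c := by
    intro n hn
    exact ⟨div_nonneg (Nat.cast_nonneg _) (Nat.cast_nonneg _), sv_nonneg _ _, hn.choose_spec⟩
  set T : ℝ≥0∞ := limsup t atTop with hTdef
  have hTle : T ≤ ENNReal.ofReal c := by
    apply limsup_le_of_le (by isBoundedDefault)
    filter_upwards with n
    simp only [htdef]
    by_cases hn : P n
    · rw [dif_pos hn]
      obtain ⟨h1, h2, h3⟩ := hwit n hn
      exact ENNReal.ofReal_le_ofReal (by linarith)
    · rw [dif_neg hn]; exact zero_le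
  have hTfin : T ≠ ⊤ := (lt_of_le_of_lt hTle ENNReal.ofReal_lt_top).ne
  set τ : ℝ := T.toReal with hτdef
  have hτ0 : 0 ≤ τ := ENNReal.toReal_nonneg
  have hτc : τ ≤ c := ENNReal.toReal_le_of_le_ofReal hc0.le hTle
  set c₁ : ℝ := c - τ + ε with hc₁def
  have hc₁0 : 0 < c₁ := by linarith
  set a : ℝ := τ + ε with hadef
  have ha0 : 0 < a := by linarith
  -- eventually upper bound on t
  have hupper : ∀ᶠ n in atTop, t n < ENNReal.ofReal a := by
    have hTa : T < ENNReal.ofReal a := by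
      have : T = ENNReal.ofReal τ := (ENNReal.ofReal_toReal hTfin).symm
      rw [this]
      exact (ENNReal.ofReal_lt_ofReal_iff ha0).mpr (by linarith)
    exact eventually_lt_of_limsup_lt hTa
  -- frequently good n
  have hfreq : ∃ᶠ n in atTop, ∃ i : Fin n, sv (A n) i ≤ a ∧ ((i : ℕ) : ℝ) / n ≤ c₁ := by
    by_cases hτε : τ ≤ ε
    · refine ((hP.and hupper).frequently).mono ?_
      rintro n ⟨hn, hup⟩
      obtain ⟨h1, h2, h3⟩ := hwit n hn
      refine ⟨hn.choose, ?_, by linarith⟩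
      simp only [htdef] at hup
      rw [dif_pos hn] at hup
      exact ((ENNReal.ofReal_lt_ofReal_iff ha0).mp hup).le
    · push_neg at hτε
      have hlow : ∃ᶠ n in atTop, ENNReal.ofReal (τ - ε) < t n := by
        apply frequently_lt_of_lt_limsup (by isBoundedDefault)
        have hT' : ENNReal.ofReal (τ - ε) < T := by
          rw [show T = ENNReal.ofReal τ from (ENNReal.ofReal_toReal hTfin).symm]
          exact (ENNReal.ofReal_lt_ofReal_iff (by linarith)).mpr (by linarith)
        exact hTdef ▸ hT'
      refine (hlow.and_eventually (hupper.and hP)).mono ?_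
      rintro n ⟨hl, hup, hn⟩
      obtain ⟨h1, h2, h3⟩ := hwit n hn
      simp only [htdef] at hl hup
      rw [dif_pos hn] at hl hup
      have hsva : sv (A n) hn.choose ≤ a :=
        ((ENNReal.ofReal_lt_ofReal_iff ha0).mp hup).le
      have hsvl : τ - ε < sv (A n) hn.choose := by
        by_contra hcon
        push_neg at hcon
        exact absurd (ENNReal.ofReal_le_ofReal hcon) (not_le.mpr hl)
      exact ⟨hn.choose, hsva, by linarith⟩
  have hvD : 0 < (volume D).toReal := ENNReal.toReal_pos hD0.ne' hDfin.ne
  -- the per-M measure bound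
  have hM : ∀ M : ℕ,
      (volume (D ∩ {x | a + ε ≤ ‖g x‖ ∧ ‖g x‖ ≤ (M : ℝ)})).toReal
        ≤ c₁ * (volume D).toReal := by
    intro M
    set f : ℝ → ℝ := bump a ε M with hfdef
    have hlim := specSymb_real h f (bump_cont _ _ _) (bump_compactSupport _ _ _ hε0)
    have hfle : ∃ᶠ n : ℕ in atTop, (n : ℝ)⁻¹ * ∑ i : Fin n, f (sv (A n) i) ≤ c₁ := by
      refine hfreq.mono ?_
      rintro n ⟨i, hsv, hin⟩
      have hn0 : 0 < n := i.pos
      have hn0' : (0:ℝ) < n := by exact_mod_cast hn0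
      have hcnt : ∑ j : Fin n, f (sv (A n) j) ≤ ((i : ℕ) : ℝ) :=
        count_bound (A n) i a f (fun x => bump_le_one _ _ _ _)
          (fun x hx => bump_zero_of_le _ _ _ _ hε0 hx) hsv
      calc (n : ℝ)⁻¹ * ∑ j : Fin n, f (sv (A n) j)
          ≤ (n : ℝ)⁻¹ * ((i : ℕ) : ℝ) :=
            mul_le_mul_of_nonneg_left hcnt (inv_nonneg.mpr hn0'.le)
        _ = ((i : ℕ) : ℝ) / n := by ring
        _ ≤ c₁ := hin
    have hL : (volume D).toReal⁻¹ * ∫ x in D, f ‖g x‖ ≤ c₁ :=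
      le_of_tendsto_of_frequently_le' hlim hfle
    set S : Set (Fin d → ℝ) := D ∩ {x | a + ε ≤ ‖g x‖ ∧ ‖g x‖ ≤ (M : ℝ)} with hSdef
    have hSmeas : MeasurableSet S :=
      hD.inter ((measurableSet_le measurable_const hg.norm).inter
        (measurableSet_le hg.norm measurable_const))
    have hone : ∀ x ∈ S, f ‖g x‖ = 1 := fun x hx =>
      bump_one a ε M _ hε0 hx.2.1 hx.2.2
    have hge := setIntegral_ge hD hDfin hg f (bump_cont _ _ _)
      (fun x => bump_nonneg _ _ _ _) (fun x => bump_le_one _ _ _ _)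
      S hSmeas Set.inter_subset_left hone
    have hI : ∫ x in D, f ‖g x‖ ≤ c₁ * (volume D).toReal := by
      have := mul_le_mul_of_nonneg_left hL hvD.le
      rw [← mul_assoc, mul_inv_cancel₀ hvD.ne', one_mul] at this
      linarith
    linarith
  -- pass to the union over M
  set Sall : Set (Fin d → ℝ) := D ∩ {x | a + ε ≤ ‖g x‖} with hSalldef
  have hSub : Sall = ⋃ M : ℕ, (D ∩ {x | a + ε ≤ ‖g x‖ ∧ ‖g x‖ ≤ (M : ℝ)}) := by
    ext x
    simp only [Set.mem_inter_iff, Set.mem_setOf_eq, Set.mem_iUnion]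
    constructor
    · rintro ⟨hxD, hxa⟩
      obtain ⟨M, hM'⟩ := exists_nat_ge ‖g x‖
      exact ⟨M, hxD, hxa, hM'⟩
    · rintro ⟨M, hxD, hxa, _⟩
      exact ⟨hxD, hxa⟩
  have hvol : volume Sall ≤ ENNReal.ofReal c₁ * volume D := by
    rw [hSub]
    have hdir : Directed (· ⊆ ·)
        (fun M : ℕ => D ∩ {x | a + ε ≤ ‖g x‖ ∧ ‖g x‖ ≤ (M : ℝ)}) := by
      apply Monotone.directed_le
      intro M N hMN
      refine Set.inter_subset_inter_right _ fun x hx => ⟨hx.1, le_trans hx.2 ?_⟩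
      exact_mod_cast Nat.cast_le.mpr hMN
    rw [hdir.measure_iUnion]
    apply iSup_le
    intro M
    have hfinS : volume (D ∩ {x | a + ε ≤ ‖g x‖ ∧ ‖g x‖ ≤ (M : ℝ)}) ≠ ⊤ :=
      (lt_of_le_of_lt (measure_mono Set.inter_subset_left) hDfin).ne
    calc volume (D ∩ {x | a + ε ≤ ‖g x‖ ∧ ‖g x‖ ≤ (M : ℝ)})
        = ENNReal.ofReal ((volume (D ∩ {x | a + ε ≤ ‖g x‖ ∧ ‖g x‖ ≤ (M : ℝ)})).toReal) :=
          (ENNReal.ofReal_toReal hfinS).symm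
      _ ≤ ENNReal.ofReal (c₁ * (volume D).toReal) := ENNReal.ofReal_le_ofReal (hM M)
      _ = ENNReal.ofReal c₁ * ENNReal.ofReal ((volume D).toReal) :=
          ENNReal.ofReal_mul hc₁0.le
      _ = ENNReal.ofReal c₁ * volume D := by rw [ENNReal.ofReal_toReal hDfin.ne]
  -- choose E
  set E : Set (Fin d → ℝ) := D ∩ {x | ‖g x‖ < a + ε} with hEdef
  have hEmeas : MeasurableSet E := hD.inter (measurableSet_lt hg.norm measurable_const)
  have hED : E ⊆ D := Set.inter_subset_left
  have hDE : D \ E = Sall := by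
    ext x
    simp only [Set.mem_diff, Set.mem_inter_iff, Set.mem_setOf_eq, hEdef, hSalldef,
      not_and, not_lt]
    constructor
    · rintro ⟨hxD, hx⟩
      exact ⟨hxD, hx hxD⟩
    · rintro ⟨hxD, hx⟩
      exact ⟨hxD, fun _ => hx⟩
  have hess : essSup (fun x => (‖g x‖₊ : ℝ≥0∞)) (volume.restrict E)
      ≤ ENNReal.ofReal (a + ε) := by
    refine essSup_le_of_ae_le _ ?_
    refine ae_restrict_of_forall_mem hEmeas fun x hx => ?_
    show (‖g x‖₊ : ℝ≥0∞) ≤ ENNReal.ofReal (a + ε)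
    rw [← enorm_eq_nnnorm, ← ofReal_norm]
    exact ENNReal.ofReal_le_ofReal hx.2.le
  have hdiv : volume (D \ E) / volume D ≤ ENNReal.ofReal c₁ := by
    rw [hDE]
    exact (ENNReal.div_le_iff hD0.ne' hDfin.ne).mpr hvol
  have hpm : pm D g ≤ volume (D \ E) / volume D
      + essSup (fun x => (‖g x‖₊ : ℝ≥0∞)) (volume.restrict E) := by
    refine le_trans (iInf_le _ E) (le_trans (iInf_le _ hEmeas) (iInf_le _ hED))
  calc pm D g ≤ volume (D \ E) / volume D
      + essSup (fun x => (‖g x‖₊ : ℝ≥0∞)) (volume.restrict E) := hpm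
    _ ≤ ENNReal.ofReal c₁ + ENNReal.ofReal (a + ε) := add_le_add hdiv hess
    _ = ENNReal.ofReal (c₁ + (a + ε)) := (ENNReal.ofReal_add hc₁0.le (by linarith)).symm
    _ = ENNReal.ofReal (ρr + (η : ℝ)) := by
        congr 1
        rw [hc₁def, hadef, hcdef, hεdef]
        ring
    _ = ENNReal.ofReal ρr + ENNReal.ofReal (η : ℝ) :=
        ENNReal.ofReal_add hρ0 (by positivity)
    _ = rho A + (η : ℝ≥0∞) := by
        rw [hρr, ENNReal.ofReal_toReal htop, ENNReal.ofReal_coe_nnreal]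
end

section
/- A matrix sequence {C_n} ∈ 𝔈 satisfies ρ({C_n}) = 0 if and only if {C_n} is zero-distributed, i.e., {C_n} ∼_σ 0, where 0 is the identically zero function on D. -/
open MeasureTheory Filter
open scoped ENNReal NNReal

noncomputable def Ncnt {n : ℕ} (A : Matrix (Fin n) (Fin n) ℂ) (ε : ℝ) : ℕ :=
  (Finset.univ.filter fun i => ε < sv A i).card

lemma sv_gt_of_lt_Ncnt {n : ℕ} {A : Matrix (Fin n) (Fin n) ℂ} {ε : ℝ} {i : Fin n}
    (h : (i : ℕ) < Ncnt A ε) : ε < sv A i := by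
  classical
  by_contra hc
  push_neg at hc
  have hsub : (Finset.univ.filter fun j => ε < sv A j) ⊆ Finset.Iio i := by
    intro j hj
    simp only [Finset.mem_filter] at hj
    rw [Finset.mem_Iio]
    by_contra hji
    push_neg at hji
    exact absurd hj.2 (not_lt.mpr ((sv_antitone A hji).trans hc))
  have := Finset.card_le_card hsub
  rw [Fin.card_Iio] at this
  unfold Ncnt at h
  omega

lemma sv_le_of_Ncnt_le {n : ℕ} {A : Matrix (Fin n) (Fin n) ℂ} {ε : ℝ} {i : Fin n}
    (h : Ncnt A ε ≤ (i : ℕ)) : sv A i ≤ ε := by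
  classical
  by_contra hc
  push_neg at hc
  have hsub : Finset.Iic i ⊆ (Finset.univ.filter fun j => ε < sv A j) := by
    intro j hj
    rw [Finset.mem_Iic] at hj
    simp only [Finset.mem_filter, Finset.mem_univ, true_and]
    exact lt_of_lt_of_le hc (sv_antitone A hj)
  have := Finset.card_le_card hsub
  rw [Fin.card_Iic] at this
  unfold Ncnt at h
  omega

lemma pA_bddBelow {n : ℕ} (A : Matrix (Fin n) (Fin n) ℂ) :
    BddBelow (Set.range fun i : Fin n => (((i : ℕ) : ℝ) / n + sv A i)) := by
  refine ⟨0, ?_⟩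
  rintro _ ⟨i, rfl⟩
  exact add_nonneg (div_nonneg (Nat.cast_nonneg _) (Nat.cast_nonneg _)) (sv_nonneg A i)

lemma pA_le {n : ℕ} (A : Matrix (Fin n) (Fin n) ℂ) (ε : ℝ) (h : Ncnt A ε < n) :
    pA A ≤ (Ncnt A ε : ℝ) / n + ε := by
  have := ciInf_le (pA_bddBelow A) (⟨Ncnt A ε, h⟩ : Fin n)
  refine this.trans ?_
  simp only
  exact add_le_add (le_refl _) (sv_le_of_Ncnt_le (A := A) (ε := ε) (i := ⟨Ncnt A ε, h⟩) (le_refl _))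

lemma min_le_pA {n : ℕ} (hn : 0 < n) (A : Matrix (Fin n) (Fin n) ℂ) (ε : ℝ) :
    min ε ((Ncnt A ε : ℝ) / n) ≤ pA A := by
  have : Nonempty (Fin n) := ⟨⟨0, hn⟩⟩
  refine le_ciInf fun i => ?_
  rcases lt_or_ge (i : ℕ) (Ncnt A ε) with hi | hi
  · refine (min_le_left _ _).trans ?_
    have := sv_gt_of_lt_Ncnt hi
    have h0 : (0:ℝ) ≤ ((i:ℕ):ℝ) / n := div_nonneg (Nat.cast_nonneg _) (Nat.cast_nonneg _)
    linarith
  · refine (min_le_right _ _).trans ?_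
    have h1 : ((Ncnt A ε : ℕ) : ℝ) / n ≤ ((i:ℕ):ℝ) / n :=
      div_le_div_of_nonneg_right (by exact_mod_cast hi) (by positivity) |>.trans (le_refl _)
    have := sv_nonneg A i
    linarith

lemma eventually_pA_lt {C : (n : ℕ) → Matrix (Fin n) (Fin n) ℂ} (h : rho C = 0)
    {ε : ℝ} (hε : 0 < ε) : ∀ᶠ n in atTop, pA (C n) < ε := by
  have hlt : Filter.limsup (fun n => ENNReal.ofReal (pA (C n))) Filter.atTop
      < ENNReal.ofReal ε := by
    rw [show Filter.limsup (fun n => ENNReal.ofReal (pA (C n))) Filter.atTop = rho C from rfl, h]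
    exact ENNReal.ofReal_pos.mpr hε
  filter_upwards [Filter.eventually_lt_of_limsup_lt hlt] with n hn
  exact (ENNReal.ofReal_lt_ofReal_iff hε).mp hn

lemma eventually_Ncnt_div_lt {C : (n : ℕ) → Matrix (Fin n) (Fin n) ℂ} (h : rho C = 0)
    {ε δ : ℝ} (hε : 0 < ε) (hδ : 0 < δ) :
    ∀ᶠ n in atTop, (Ncnt (C n) ε : ℝ) / n < δ := by
  filter_upwards [eventually_pA_lt h (lt_min hε hδ)] with n hn
  rcases Nat.eq_zero_or_pos n with rfl | hn0
  · have : Ncnt (C 0) ε = 0 := by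
      classical
      unfold Ncnt
      simp
    rw [this]
    simpa using hδ
  · by_contra hc
    push_neg at hc
    have := min_le_pA hn0 (C n) ε
    have h2 : min ε δ ≤ min ε ((Ncnt (C n) ε : ℝ) / n) := le_min (min_le_left _ _) ((min_le_right ε δ).trans hc)
    linarith

lemma sum_const_add_ite {n : ℕ} (A : Matrix (Fin n) (Fin n) ℂ) (t c b : ℝ) :
    ∑ i : Fin n, (c + if t < sv A i then b else 0) = n * c + (Ncnt A t) * b := by
  rw [Finset.sum_add_distrib, Finset.sum_const, Finset.card_univ, Fintype.card_fin,
    ← Finset.sum_filter, Finset.sum_const, nsmul_eq_mul, nsmul_eq_mul, Ncnt]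

lemma specsymb_zero_of_rho {d : ℕ} (D : Set (Fin d → ℝ)) (hD0 : 0 < volume D)
    (hDfin : volume D < ⊤) {C : (n : ℕ) → Matrix (Fin n) (Fin n) ℂ} (h : rho C = 0) :
    SpecSymb D C (fun _ => 0) := by
  classical
  intro F hF hFc
  have hvol : (volume D).toReal ≠ 0 := (ENNReal.toReal_pos hD0.ne' hDfin.ne).ne'
  have hRHS : (volume D).toReal⁻¹ • ∫ x in D, F ‖(fun _ : Fin d → ℝ => (0:ℂ)) x‖ = F 0 := by
    simp only [norm_zero]
    rw [MeasureTheory.setIntegral_const, smul_smul, measureReal_def, inv_mul_cancel₀ hvol, one_smul]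
  rw [hRHS]
  obtain ⟨M, hM⟩ := hFc.exists_bound_of_continuous hF
  have hM0 : 0 ≤ M := (norm_nonneg (F 0)).trans (hM 0)
  rw [Metric.tendsto_nhds]
  intro η hη
  obtain ⟨δ, hδ, hδF⟩ := Metric.continuousAt_iff.mp hF.continuousAt (η/2) (by linarith)
  filter_upwards [eventually_Ncnt_div_lt h (show (0:ℝ) < δ/2 by linarith)
      (show (0:ℝ) < η/(4*M+4) by positivity), Filter.eventually_ge_atTop 1] with n hNn hn1
  set N := Ncnt (C n) (δ/2) with hNdef
  have hn0 : (0:ℝ) < (n:ℝ) := by exact_mod_cast hn1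
  have hne : (n:ℂ) ≠ 0 := Nat.cast_ne_zero.mpr (by omega)
  rw [dist_eq_norm]
  have key : (n:ℂ)⁻¹ * ∑ i : Fin n, F (sv (C n) i) - F 0
      = (n:ℂ)⁻¹ * ∑ i : Fin n, (F (sv (C n) i) - F 0) := by
    rw [Finset.sum_sub_distrib, mul_sub]
    congr 1
    rw [Finset.sum_const, Finset.card_univ, Fintype.card_fin, nsmul_eq_mul]
    field_simp
  rw [key, norm_mul, norm_inv, Complex.norm_natCast]
  have hsum : ‖∑ i : Fin n, (F (sv (C n) i) - F 0)‖
      ≤ ∑ i : Fin n, (η/2 + if δ/2 < sv (C n) i then 2*M else 0) := by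
    refine (norm_sum_le _ _).trans (Finset.sum_le_sum fun i _ => ?_)
    by_cases hi : δ/2 < sv (C n) i
    · simp only [hi, if_true]
      have := norm_sub_le (F (sv (C n) i)) (F 0)
      have h1 := hM (sv (C n) i); have h2 := hM 0
      linarith
    · push_neg at hi
      have hdist : dist (sv (C n) i) 0 < δ := by
        rw [Real.dist_eq, sub_zero, abs_of_nonneg (sv_nonneg _ _)]
        linarith
      have := hδF hdist
      rw [dist_eq_norm] at this
      rw [if_neg (not_lt.mpr hi)]
      linarith
  rw [sum_const_add_ite] at hsum
  have hchain : (n:ℝ)⁻¹ * ‖∑ i : Fin n, (F (sv (C n) i) - F 0)‖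
      ≤ η/2 + ((N:ℝ)/n) * (2*M) := by
    have := mul_le_mul_of_nonneg_left hsum (inv_nonneg.mpr hn0.le)
    refine this.trans (le_of_eq ?_)
    field_simp
    ring
  have hfrac : ((N:ℝ)/n) * (2*M) ≤ η/(4*M+4) * (2*M) :=
    mul_le_mul_of_nonneg_right hNn.le (by linarith)
  have hlast : η/(4*M+4) * (2*M) < η/2 := by
    rw [div_mul_eq_mul_div, div_lt_div_iff₀ (by linarith) two_pos]
    nlinarith
  linarith

lemma sum_ite_zero_one {n : ℕ} (A : Matrix (Fin n) (Fin n) ℂ) (t : ℝ) :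
    ∑ i : Fin n, (if t < sv A i then (0:ℝ) else 1) = (n:ℝ) - Ncnt A t := by
  have h1 : ∀ i : Fin n, (if t < sv A i then (0:ℝ) else 1)
      = 1 - (if t < sv A i then (1:ℝ) else 0) := fun i => by
    by_cases h : t < sv A i <;> simp [h]
  rw [Finset.sum_congr rfl fun i _ => h1 i, Finset.sum_sub_distrib, Finset.sum_const,
    ← Finset.sum_filter, Finset.sum_const, Finset.card_univ, Fintype.card_fin,
    nsmul_eq_mul, nsmul_eq_mul, mul_one, mul_one, Ncnt]

lemma tendsto_Ncnt_div {d : ℕ} (D : Set (Fin d → ℝ)) (hD0 : 0 < volume D)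
    (hDfin : volume D < ⊤) {C : (n : ℕ) → Matrix (Fin n) (Fin n) ℂ}
    (h : SpecSymb D C (fun _ => 0)) {ε : ℝ} (hε : 0 < ε) :
    Tendsto (fun n => (Ncnt (C n) ε : ℝ) / n) atTop (nhds 0) := by
  classical
  set f : ℝ → ℝ := fun x => max (1 - |x|/ε) 0 with hfdef
  have hfcont : Continuous f := (continuous_const.sub (continuous_abs.div_const ε)).max
    continuous_const
  have hFcont : Continuous (fun x => ((f x : ℝ) : ℂ)) := Complex.continuous_ofReal.comp hfcont
  have hFsupp : HasCompactSupport (fun x => ((f x : ℝ) : ℂ)) := by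
    refine HasCompactSupport.intro (isCompact_Icc (a := -ε) (b := ε)) fun x hx => ?_
    have hax : ε < |x| := by
      rw [Set.mem_Icc, not_and_or, not_le, not_le] at hx
      rcases hx with hx | hx
      · rw [abs_of_neg (by linarith)]; linarith
      · rw [abs_of_pos (by linarith)]; exact hx
    have : f x = 0 := by
      rw [hfdef]
      refine max_eq_right ?_
      have : 1 < |x|/ε := (one_lt_div hε).mpr hax
      linarith
    rw [this, Complex.ofReal_zero]
  have htend := h _ hFcont hFsupp
  have hvol : (volume D).toReal ≠ 0 := (ENNReal.toReal_pos hD0.ne' hDfin.ne).ne'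
  have hRHS : (volume D).toReal⁻¹ • ∫ x in D, ((f ‖(fun _ : Fin d → ℝ => (0:ℂ)) x‖ : ℝ) : ℂ)
      = 1 := by
    simp only [norm_zero]
    rw [MeasureTheory.setIntegral_const, smul_smul, measureReal_def, inv_mul_cancel₀ hvol, one_smul]
    have : f 0 = 1 := by
      rw [hfdef]; simp
    rw [this, Complex.ofReal_one]
  rw [hRHS] at htend
  -- extract real tendsto
  have hg : Tendsto (fun n : ℕ => (n:ℝ)⁻¹ * ∑ i : Fin n, f (sv (C n) i)) atTop (nhds 1) := by
    have hre := (Complex.continuous_re.tendsto 1).comp htend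
    have heq : ∀ n : ℕ, ((n:ℂ)⁻¹ * ∑ i : Fin n, ((f (sv (C n) i) : ℝ) : ℂ)).re
        = (n:ℝ)⁻¹ * ∑ i : Fin n, f (sv (C n) i) := by
      intro n
      have : ((n:ℂ)⁻¹ * ∑ i : Fin n, ((f (sv (C n) i) : ℝ) : ℂ))
          = (((n:ℝ)⁻¹ * ∑ i : Fin n, f (sv (C n) i) : ℝ) : ℂ) := by
        push_cast; ring
      rw [this, Complex.ofReal_re]
    have h1re : ((1:ℂ)).re = (1:ℝ) := Complex.one_re
    rw [show ((1:ℂ)).re = (1:ℝ) from Complex.one_re] at hre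
    exact hre.congr heq
  have hbound : ∀ n : ℕ, (Ncnt (C n) ε : ℝ) / n
      ≤ 1 - (n:ℝ)⁻¹ * ∑ i : Fin n, f (sv (C n) i) := by
    intro n
    rcases Nat.eq_zero_or_pos n with rfl | hn0
    · simp [Ncnt]
    · have hn0' : (0:ℝ) < (n:ℝ) := by exact_mod_cast hn0
      have hkey : ∑ i : Fin n, f (sv (C n) i) ≤ (n:ℝ) - Ncnt (C n) ε := by
        rw [← sum_ite_zero_one (C n) ε]
        refine Finset.sum_le_sum fun i _ => ?_
        by_cases hi : ε < sv (C n) i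
        · rw [if_pos hi, hfdef]
          refine le_of_eq (max_eq_right ?_)
          have h1 : 1 ≤ |sv (C n) i|/ε := by
            rw [abs_of_nonneg (sv_nonneg _ _)]
            exact (one_le_div hε).mpr hi.le
          linarith
        · rw [if_neg hi, hfdef]
          refine max_le ?_ zero_le_one
          have : 0 ≤ |sv (C n) i|/ε := by positivity
          linarith
      have h2 : (n:ℝ)⁻¹ * ∑ i : Fin n, f (sv (C n) i)
          ≤ (n:ℝ)⁻¹ * ((n:ℝ) - Ncnt (C n) ε) :=
        mul_le_mul_of_nonneg_left hkey (inv_nonneg.mpr hn0'.le)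
      have h3 : (n:ℝ)⁻¹ * ((n:ℝ) - Ncnt (C n) ε) = 1 - (Ncnt (C n) ε : ℝ)/n := by
        field_simp
      linarith
  have hlim : Tendsto (fun n : ℕ => 1 - (n:ℝ)⁻¹ * ∑ i : Fin n, f (sv (C n) i)) atTop
      (nhds 0) := by
    have := tendsto_const_nhds (x := (1:ℝ)) (f := atTop (α := ℕ)) |>.sub hg
    simpa using this
  exact squeeze_zero (fun n => div_nonneg (Nat.cast_nonneg _) (Nat.cast_nonneg _)) hbound hlim

lemma rho_zero_of_specsymb {d : ℕ} (D : Set (Fin d → ℝ)) (hD0 : 0 < volume D)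
    (hDfin : volume D < ⊤) {C : (n : ℕ) → Matrix (Fin n) (Fin n) ℂ}
    (h : SpecSymb D C (fun _ => 0)) : rho C = 0 := by
  have hbound : ∀ r : ℝ, 0 < r → rho C ≤ ENNReal.ofReal r := by
    intro r hr
    have hr2 : (0:ℝ) < r/2 := by linarith
    have hmin : (0:ℝ) < min (r/2) (1/2) := lt_min hr2 (by norm_num)
    have hev' := (tendsto_Ncnt_div D hD0 hDfin h hr2).eventually_lt_const hmin
    have hev : ∀ᶠ n in atTop, ENNReal.ofReal (pA (C n)) ≤ ENNReal.ofReal r := by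
      filter_upwards [hev', Filter.eventually_ge_atTop 1] with n hn hn1
      have hn0 : (0:ℝ) < (n:ℝ) := by exact_mod_cast hn1
      have hlt1 : (Ncnt (C n) (r/2) : ℝ) / n < 1 :=
        lt_of_lt_of_le hn (le_trans (min_le_right _ _) (by norm_num))
      have hNn : Ncnt (C n) (r/2) < n := by
        have := (div_lt_one hn0).mp hlt1
        exact_mod_cast this
      have hp := pA_le (C n) (r/2) hNn
      refine ENNReal.ofReal_le_ofReal ?_
      have := min_le_left (r/2) (1/2)
      linarith
    exact Filter.limsup_le_of_le (by isBoundedDefault) hev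
  refine le_antisymm ?_ bot_le
  refine ENNReal.le_of_forall_pos_le_add fun ε hε _ => ?_
  rw [zero_add]
  have := hbound ε (by exact_mod_cast hε)
  rwa [ENNReal.ofReal_coe_nnreal] at this

/-- `ρ({C_n}) = 0` iff `{C_n}` is zero-distributed, i.e. `{C_n} ∼_σ 0`. -/
theorem rho_eq_zero_iff_zero_distributed {d : ℕ} (D : Set (Fin d → ℝ))
    (hD : MeasurableSet D) (hD0 : 0 < volume D) (hDfin : volume D < ⊤)
    (C : (n : ℕ) → Matrix (Fin n) (Fin n) ℂ) :
    rho C = 0 ↔ SpecSymb D C (fun _ => 0) :=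
  ⟨fun h => specsymb_zero_of_rho D hD0 hDfin h, fun h => rho_zero_of_specsymb D hD0 hDfin h⟩
end

section
/- Let G be a group in 𝒞_D, and suppose ({B_{n,m}}_n, f_m) ∈ G for every m ≥ 1. Then the family of matrix sequences ({B_{n,m}}_n)_m is Cauchy with respect to the pseudometric d_acs if and only if the sequence of functions (f_m)_m is Cauchy with respect to the metric d_m. -/
open MeasureTheory Filter
open scoped ENNReal NNReal

lemma tendsto_real {d : ℕ} (D : Set (Fin d → ℝ))
    (C : (n : ℕ) → Matrix (Fin n) (Fin n) ℂ) (h : (Fin d → ℝ) → ℂ)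
    (hsymb : SpecSymb D C h) (g : ℝ → ℝ) (hgc : Continuous g) (hgs : HasCompactSupport g) :
    Tendsto (fun n : ℕ => (n : ℝ)⁻¹ * ∑ i : Fin n, g (sv (C n) i)) atTop
      (nhds ((volume D).toReal⁻¹ * ∫ x in D, g ‖h x‖)) := by
  have hF := hsymb (fun x => ((g x : ℝ) : ℂ)) (Complex.continuous_ofReal.comp hgc)
    (hgs.comp_left (g := Complex.ofReal) Complex.ofReal_zero)
  have h2 := (Complex.continuous_re.tendsto _).comp hF
  have e1 : (fun n : ℕ => ((n : ℂ)⁻¹ * ∑ i : Fin n, ((g (sv (C n) i) : ℝ) : ℂ)).re)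
      = fun n : ℕ => (n : ℝ)⁻¹ * ∑ i : Fin n, g (sv (C n) i) := by
    funext n
    rw [show ((n : ℂ)⁻¹ * ∑ i : Fin n, ((g (sv (C n) i) : ℝ) : ℂ))
        = (((n : ℝ)⁻¹ * ∑ i : Fin n, g (sv (C n) i) : ℝ) : ℂ) by push_cast; ring]
    exact Complex.ofReal_re _
  have e2 : (((volume D).toReal⁻¹ : ℝ) • ∫ x in D, ((g ‖h x‖ : ℝ) : ℂ)).re
      = (volume D).toReal⁻¹ * ∫ x in D, g ‖h x‖ := by
    have e3 : (∫ x in D, ((g ‖h x‖ : ℝ) : ℂ)) = ((∫ x in D, g ‖h x‖ : ℝ) : ℂ) := by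
      exact integral_ofReal
    rw [e3, Complex.real_smul, ← Complex.ofReal_mul, Complex.ofReal_re]
  rw [Function.comp_def] at h2
  rw [e1] at h2
  rw [e2] at h2
  exact h2

noncomputable def phi (a a' x : ℝ) : ℝ := max 0 (min 1 (min ((a' - x) / (a' - a)) (x + 2)))

lemma phi_nonneg (a a' x : ℝ) : 0 ≤ phi a a' x := le_max_left _ _

lemma phi_le_one (a a' x : ℝ) : phi a a' x ≤ 1 := max_le (by norm_num) (min_le_left _ _)

lemma phi_continuous (a a' : ℝ) : Continuous (phi a a') := by
  unfold phi
  exact continuous_const.max (continuous_const.min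
    (((continuous_const.sub continuous_id).div_const _).min (continuous_id.add continuous_const)))

lemma phi_eq_one {a a' x : ℝ} (hx : 0 ≤ x) (hxa : x ≤ a) (haa' : a < a') : phi a a' x = 1 := by
  unfold phi
  rw [min_eq_left, max_eq_right zero_le_one]
  refine le_min ((one_le_div (by linarith)).2 (by linarith)) (by linarith)

lemma phi_eq_zero {a a' x : ℝ} (haa' : a < a') (hx : a' < x) : phi a a' x = 0 := by
  unfold phi
  rw [max_eq_left]
  refine le_trans (min_le_right _ _) (le_trans (min_le_left _ _) ?_)
  exact le_of_lt (div_neg_of_neg_of_pos (by linarith) (by linarith))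

lemma phi_hasCompactSupport {a a' : ℝ} (haa' : a < a') : HasCompactSupport (phi a a') := by
  refine HasCompactSupport.intro (isCompact_Icc (a := -2) (b := a')) fun x hx => ?_
  simp only [Set.mem_Icc, not_and_or, not_le] at hx
  rcases hx with hx | hx
  · unfold phi
    rw [max_eq_left]
    exact le_trans (min_le_right _ _) (le_trans (min_le_right _ _) (by linarith))
  · exact phi_eq_zero haa' hx

section comparisons
variable {d : ℕ} {D : Set (Fin d → ℝ)} {h : (Fin d → ℝ) → ℂ}

lemma integrableOn_comp (hDfin : volume D < ⊤) (hmeas : Measurable h)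
    (g : ℝ → ℝ) (hgc : Continuous g) (hgs : HasCompactSupport g) :
    IntegrableOn (fun x : Fin d → ℝ => g ‖h x‖) D volume := by
  haveI : IsFiniteMeasure (volume.restrict D) := ⟨by rwa [Measure.restrict_apply_univ]⟩
  obtain ⟨Cb, hCb⟩ := (hgc.abs).bounded_above_of_compact_support hgs.abs
  refine Integrable.mono' (integrable_const Cb)
    ((hgc.measurable.comp hmeas.norm).aestronglyMeasurable) (ae_of_all _ fun x => ?_)
  simpa [Real.norm_eq_abs, abs_abs] using hCb ‖h x‖

lemma integral_le_meas (hD : MeasurableSet D) (hDfin : volume D < ⊤) (hmeas : Measurable h)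
    {a a' : ℝ} (haa' : a < a') :
    ∫ x in D, phi a a' ‖h x‖ ≤ (volume (D ∩ {x | ‖h x‖ ≤ a'})).toReal := by
  haveI : IsFiniteMeasure (volume.restrict D) := ⟨by rwa [Measure.restrict_apply_univ]⟩
  set S : Set (Fin d → ℝ) := {x | ‖h x‖ ≤ a'} with hSdef
  have hS : MeasurableSet S := measurableSet_le hmeas.norm measurable_const
  have key : ∫ x in D, phi a a' ‖h x‖ ≤ ∫ x in D, S.indicator (fun _ => (1:ℝ)) x := by
    refine setIntegral_mono_on
      (integrableOn_comp hDfin hmeas _ (phi_continuous _ _) (phi_hasCompactSupport haa'))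
      ((integrable_const (1:ℝ)).indicator hS) hD fun x _ => ?_
    by_cases hx : x ∈ S
    · rw [Set.indicator_of_mem hx]; exact phi_le_one _ _ _
    · rw [Set.indicator_of_notMem hx]
      rw [phi_eq_zero haa' (lt_of_not_ge hx)]
  rw [setIntegral_indicator hS, setIntegral_const, smul_eq_mul, mul_one] at key
  exact key

lemma meas_le_integral (hD : MeasurableSet D) (hDfin : volume D < ⊤) (hmeas : Measurable h)
    {a a' : ℝ} (ha : 0 ≤ a) (haa' : a < a') :
    (volume (D ∩ {x | ‖h x‖ ≤ a})).toReal ≤ ∫ x in D, phi a a' ‖h x‖ := by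
  haveI : IsFiniteMeasure (volume.restrict D) := ⟨by rwa [Measure.restrict_apply_univ]⟩
  set S : Set (Fin d → ℝ) := {x | ‖h x‖ ≤ a} with hSdef
  have hS : MeasurableSet S := measurableSet_le hmeas.norm measurable_const
  have key : ∫ x in D, S.indicator (fun _ => (1:ℝ)) x ≤ ∫ x in D, phi a a' ‖h x‖ := by
    refine setIntegral_mono_on ((integrable_const (1:ℝ)).indicator hS)
      (integrableOn_comp hDfin hmeas _ (phi_continuous _ _) (phi_hasCompactSupport haa'))
      hD fun x _ => ?_
    by_cases hx : x ∈ S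
    · rw [Set.indicator_of_mem hx, phi_eq_one (norm_nonneg _) hx haa']
    · rw [Set.indicator_of_notMem hx]; exact phi_nonneg _ _ _
  rw [setIntegral_indicator hS, setIntegral_const, smul_eq_mul, mul_one] at key
  exact key

end comparisons

lemma lemA {d : ℕ} {D : Set (Fin d → ℝ)} (hD : MeasurableSet D) (hD0 : 0 < volume D)
    (hDfin : volume D < ⊤) {C : (n : ℕ) → Matrix (Fin n) (Fin n) ℂ} {h : (Fin d → ℝ) → ℂ}
    (hmeas : Measurable h) (hsymb : SpecSymb D C h) {r : ℝ} (hr : 0 < r)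
    (hrho : rho C < ENNReal.ofReal r) : pm D h ≤ ENNReal.ofReal (3 * r) := by
  have hrr : r < 2 * r := by linarith
  have hlim := tendsto_real D C h hsymb (phi r (2*r)) (phi_continuous _ _)
    (phi_hasCompactSupport hrr)
  have hev : ∀ᶠ n : ℕ in atTop, 1 - r ≤ (n:ℝ)⁻¹ * ∑ i : Fin n, phi r (2*r) (sv (C n) i) := by
    have h1 := eventually_lt_of_limsup_lt hrho
    filter_upwards [h1, eventually_ge_atTop 1] with n hn hn1
    have hpa : pA (C n) < r := (ENNReal.ofReal_lt_ofReal_iff hr).1 hn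
    haveI : Nonempty (Fin n) := ⟨⟨0, hn1⟩⟩
    obtain ⟨i, hi⟩ := exists_lt_of_ciInf_lt hpa
    have hn0 : (0:ℝ) < n := by exact_mod_cast hn1
    have hin : (0:ℝ) ≤ ((i:ℕ):ℝ)/n := by positivity
    have hsvi : sv (C n) i < r := by linarith
    have hinr : ((i:ℕ):ℝ)/n < r := lt_of_le_of_lt (by linarith [sv_nonneg (C n) i]) hi
    have hsum : ((n:ℝ) - i) ≤ ∑ j : Fin n, phi r (2*r) (sv (C n) j) := by
      calc ((n:ℝ) - i) = ((Finset.Ici i).card : ℝ) := by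
            rw [Fin.card_Ici, Nat.cast_sub (le_of_lt i.2)]
        _ = ∑ _j ∈ Finset.Ici i, (1:ℝ) := by simp
        _ ≤ ∑ j ∈ Finset.Ici i, phi r (2*r) (sv (C n) j) := by
            refine Finset.sum_le_sum fun j hj => ?_
            rw [phi_eq_one (sv_nonneg _ _)
              (le_of_lt (lt_of_le_of_lt (sv_antitone (C n) (Finset.mem_Ici.1 hj)) hsvi)) hrr]
        _ ≤ ∑ j : Fin n, phi r (2*r) (sv (C n) j) :=
            Finset.sum_le_sum_of_subset_of_nonneg (Finset.subset_univ _)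
              (fun j _ _ => phi_nonneg _ _ _)
    calc 1 - r ≤ ((n:ℝ) - i)/n := by
          rw [sub_div, div_self (ne_of_gt hn0)]; linarith
      _ = (n:ℝ)⁻¹ * ((n:ℝ) - i) := by ring
      _ ≤ (n:ℝ)⁻¹ * ∑ j : Fin n, phi r (2*r) (sv (C n) j) :=
          mul_le_mul_of_nonneg_left hsum (by positivity)
  have hL : 1 - r ≤ (volume D).toReal⁻¹ * ∫ x in D, phi r (2*r) ‖h x‖ := ge_of_tendsto hlim hev
  have hT0 : 0 < (volume D).toReal := ENNReal.toReal_pos (ne_of_gt hD0) (ne_of_lt hDfin)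
  set S : Set (Fin d → ℝ) := {x | ‖h x‖ ≤ 2*r} with hSdef
  have hS : MeasurableSet S := measurableSet_le hmeas.norm measurable_const
  have hI : ∫ x in D, phi r (2*r) ‖h x‖ ≤ (volume (D ∩ S)).toReal :=
    integral_le_meas hD hDfin hmeas hrr
  have h2 : (1 - r) * (volume D).toReal ≤ (volume (D ∩ S)).toReal := by
    rw [inv_mul_eq_div, le_div_iff₀ hT0] at hL
    exact le_trans hL hI
  have hfin1 : volume (D ∩ S) ≠ ⊤ :=
    ne_of_lt (lt_of_le_of_lt (measure_mono Set.inter_subset_left) hDfin)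
  have hfin2 : volume (D \ S) ≠ ⊤ :=
    ne_of_lt (lt_of_le_of_lt (measure_mono Set.diff_subset) hDfin)
  have hsplit : (volume (D ∩ S)).toReal + (volume (D \ S)).toReal = (volume D).toReal := by
    rw [← ENNReal.toReal_add hfin1 hfin2, measure_inter_add_diff D hS]
  have h3 : (volume (D \ S)).toReal ≤ r * (volume D).toReal := by nlinarith
  have h4 : volume (D \ S) ≤ ENNReal.ofReal r * volume D := by
    rw [← ENNReal.ofReal_toReal hfin2]
    calc ENNReal.ofReal (volume (D \ S)).toReal
        ≤ ENNReal.ofReal (r * (volume D).toReal) := ENNReal.ofReal_le_ofReal h3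
      _ = ENNReal.ofReal r * ENNReal.ofReal (volume D).toReal := ENNReal.ofReal_mul (le_of_lt hr)
      _ = ENNReal.ofReal r * volume D := by rw [ENNReal.ofReal_toReal (ne_of_lt hDfin)]
  have hE : MeasurableSet (D ∩ S) := hD.inter hS
  have hpm : pm D h ≤ volume (D \ (D ∩ S))/volume D
      + essSup (fun x => (‖h x‖₊ : ℝ≥0∞)) (volume.restrict (D ∩ S)) := by
    refine iInf_le_of_le (D ∩ S) ?_
    refine iInf_le_of_le hE ?_
    exact iInf_le _ Set.inter_subset_left
  have hq : volume (D \ S)/volume D ≤ ENNReal.ofReal r := by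
    rw [ENNReal.div_le_iff (ne_of_gt hD0) (ne_of_lt hDfin)]
    exact h4
  have hess : essSup (fun x => (‖h x‖₊ : ℝ≥0∞)) (volume.restrict (D ∩ S))
      ≤ ENNReal.ofReal (2*r) := by
    refine essSup_le_of_ae_le _ ?_
    refine ae_restrict_of_forall_mem hE fun x hx => ?_
    simp only [← enorm_eq_nnnorm, ← ofReal_norm]
    exact ENNReal.ofReal_le_ofReal hx.2
  calc pm D h ≤ _ := hpm
    _ ≤ ENNReal.ofReal r + ENNReal.ofReal (2*r) := by
        rw [Set.diff_self_inter]
        exact add_le_add hq hess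
    _ = ENNReal.ofReal (3*r) := by
        rw [← ENNReal.ofReal_add (le_of_lt hr) (by linarith)]
        ring_nf

lemma lemB {d : ℕ} {D : Set (Fin d → ℝ)} (hD : MeasurableSet D) (hD0 : 0 < volume D)
    (hDfin : volume D < ⊤) {C : (n : ℕ) → Matrix (Fin n) (Fin n) ℂ} {h : (Fin d → ℝ) → ℂ}
    (hmeas : Measurable h) (hsymb : SpecSymb D C h) {r : ℝ} (hr : 0 < r) (hr1 : r ≤ 1)
    (hpm : pm D h < ENNReal.ofReal r) : rho C ≤ ENNReal.ofReal (2 * r) := by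
  rw [pm, iInf_lt_iff] at hpm
  obtain ⟨E, hpm⟩ := hpm
  rw [iInf_lt_iff] at hpm
  obtain ⟨hE, hpm⟩ := hpm
  rw [iInf_lt_iff] at hpm
  obtain ⟨hED, hlt⟩ := hpm
  set a := volume (D \ E) / volume D with hadef
  set b := essSup (fun x => (‖h x‖₊ : ℝ≥0∞)) (volume.restrict E) with hbdef
  have ha : a < ENNReal.ofReal r := lt_of_le_of_lt le_self_add hlt
  have hb : b < ENNReal.ofReal r := lt_of_le_of_lt le_add_self hlt
  have hane : a ≠ ⊤ := ne_of_lt (lt_of_lt_of_le ha le_top)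
  have hbne : b ≠ ⊤ := ne_of_lt (lt_of_lt_of_le hb le_top)
  set aR := a.toReal with haRdef
  set bR := b.toReal with hbRdef
  have haR : aR < r := by
    have := (ENNReal.toReal_lt_toReal hane ENNReal.ofReal_ne_top).2 ha
    rwa [ENNReal.toReal_ofReal (le_of_lt hr)] at this
  have hbR : bR < r := by
    have := (ENNReal.toReal_lt_toReal hbne ENNReal.ofReal_ne_top).2 hb
    rwa [ENNReal.toReal_ofReal (le_of_lt hr)] at this
  have haR0 : 0 ≤ aR := ENNReal.toReal_nonneg
  have hbR0 : 0 ≤ bR := ENNReal.toReal_nonneg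
  set c' := (bR + r)/2 with hc'def
  have hbc' : bR < c' := by simp only [hc'def]; linarith
  have hc'r : c' < r := by simp only [hc'def]; linarith
  have hT0 : 0 < (volume D).toReal := ENNReal.toReal_pos (ne_of_gt hD0) (ne_of_lt hDfin)
  -- a.e. bound on E
  have hae : ∀ᵐ x ∂(volume.restrict E), ‖h x‖ ≤ bR := by
    filter_upwards [ae_le_essSup (μ := volume.restrict E)
      (f := fun x => (‖h x‖₊ : ℝ≥0∞))] with x hx
    have hx' : ENNReal.ofReal ‖h x‖ ≤ ENNReal.ofReal bR := by
      rw [ofReal_norm, enorm_eq_nnnorm]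
      rw [← hbdef, ← ENNReal.ofReal_toReal hbne] at hx
      exact hx
    exact (ENNReal.ofReal_le_ofReal_iff hbR0).1 hx'
  set S : Set (Fin d → ℝ) := {x | ‖h x‖ ≤ bR} with hSdef
  have hS : MeasurableSet S := measurableSet_le hmeas.norm measurable_const
  have hES0 : volume (E \ S) = 0 := by
    have h0 : ∀ᵐ x ∂(volume.restrict E), x ∈ S := hae
    have h1 := ae_iff.1 h0
    have h2 : volume (Sᶜ ∩ E) = 0 := by
      rw [← Measure.restrict_apply hS.compl]
      exact h1
    rw [Set.diff_eq, Set.inter_comm]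
    exact h2
  -- measure comparison
  have hvolE : volume E ≤ volume (D ∩ S) := by
    have h1 : volume (E ∩ S) + volume (E \ S) = volume E := measure_inter_add_diff E hS
    rw [hES0, add_zero] at h1
    rw [← h1]
    exact measure_mono (Set.inter_subset_inter_left S hED)
  have hDE : volume (D \ E) = a * volume D := by
    rw [hadef, ENNReal.div_mul_cancel (ne_of_gt hD0) (ne_of_lt hDfin)]
  have hEfin : volume E ≠ ⊤ := ne_of_lt (lt_of_le_of_lt (measure_mono hED) hDfin)
  have hsplitD : volume E + volume (D \ E) = volume D := by
    have h1 : volume (D ∩ E) + volume (D \ E) = volume D := measure_inter_add_diff D hE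
    rwa [Set.inter_eq_right.2 hED] at h1
  have hvolEreal : (volume E).toReal = (1 - aR) * (volume D).toReal := by
    have hDEfin : volume (D \ E) ≠ ⊤ := ne_of_lt (lt_of_le_of_lt (measure_mono Set.diff_subset) hDfin)
    have h1 : (volume E).toReal + (volume (D \ E)).toReal = (volume D).toReal := by
      rw [← ENNReal.toReal_add hEfin hDEfin, hsplitD]
    have h2 : (volume (D \ E)).toReal = aR * (volume D).toReal := by
      rw [hDE, ENNReal.toReal_mul]
    linarith
  -- integral lower bound
  have hIlow : (1 - aR) * (volume D).toReal ≤ ∫ x in D, phi bR c' ‖h x‖ := by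
    calc (1 - aR) * (volume D).toReal = (volume E).toReal := hvolEreal.symm
      _ ≤ (volume (D ∩ S)).toReal := by
          apply ENNReal.toReal_le_toReal hEfin (ne_of_lt (lt_of_le_of_lt (measure_mono Set.inter_subset_left) hDfin)) |>.2 hvolE
      _ ≤ ∫ x in D, phi bR c' ‖h x‖ := meas_le_integral hD hDfin hmeas hbR0 hbc'
  have hlim := tendsto_real D C h hsymb (phi bR c') (phi_continuous _ _)
    (phi_hasCompactSupport hbc')
  have hLgt : 1 - r < (volume D).toReal⁻¹ * ∫ x in D, phi bR c' ‖h x‖ := by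
    have : 1 - aR ≤ (volume D).toReal⁻¹ * ∫ x in D, phi bR c' ‖h x‖ := by
      rw [inv_mul_eq_div, le_div_iff₀ hT0]
      exact hIlow
    linarith
  have hev := hlim.eventually (eventually_gt_nhds hLgt)
  have hfinal : ∀ᶠ n : ℕ in atTop, ENNReal.ofReal (pA (C n)) ≤ ENNReal.ofReal (2 * r) := by
    filter_upwards [hev, eventually_ge_atTop 1] with n hn hn1
    have hn0 : (0:ℝ) < n := by exact_mod_cast hn1
    classical
    set k := (Finset.univ.filter fun j : Fin n => c' < sv (C n) j).card with hkdef
    -- sum ≤ n - k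
    have hcards : (Finset.univ.filter fun j : Fin n => sv (C n) j ≤ c').card = n - k := by
      have := Finset.card_filter_add_card_filter_not
        (s := (Finset.univ : Finset (Fin n))) (p := fun j => c' < sv (C n) j)
      simp only [not_lt, Finset.card_univ, Fintype.card_fin] at this
      omega
    have hsum : ∑ j : Fin n, phi bR c' (sv (C n) j) ≤ ((n - k : ℕ) : ℝ) := by
      rw [← hcards, ← Finset.sum_boole]
      refine Finset.sum_le_sum fun j _ => ?_
      by_cases hj : sv (C n) j ≤ c'
      · simp only [hj, if_true]; exact phi_le_one _ _ _
      · simp only [hj, if_false]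
        rw [phi_eq_zero hbc' (lt_of_not_ge hj)]
    have hkn : k ≤ n := by
      rw [hkdef]
      calc (Finset.univ.filter fun j : Fin n => c' < sv (C n) j).card
          ≤ (Finset.univ : Finset (Fin n)).card := Finset.card_filter_le _ _
        _ = n := by simp
    -- from hn : 1 - r < n⁻¹ * ∑ ...
    have hkr : (k : ℝ) < r * n := by
      have h1 : (n:ℝ)⁻¹ * ∑ j : Fin n, phi bR c' (sv (C n) j) ≤ (n:ℝ)⁻¹ * ((n - k : ℕ):ℝ) :=
        mul_le_mul_of_nonneg_left hsum (by positivity)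
      have h2 : ((n - k : ℕ):ℝ) = (n:ℝ) - k := by
        rw [Nat.cast_sub hkn]
      rw [h2] at h1
      have h3 : 1 - r < (n:ℝ)⁻¹ * ((n:ℝ) - k) := lt_of_lt_of_le hn h1
      have h4 : (n:ℝ)⁻¹ * ((n:ℝ) - k) = 1 - k/n := by
        field_simp
      rw [h4] at h3
      have : (k:ℝ)/n < r := by linarith
      calc (k:ℝ) = (k/n) * n := by field_simp
        _ < r * n := by exact mul_lt_mul_of_pos_right this hn0
    have hklt : k < n := by
      have : (k:ℝ) < n := lt_of_lt_of_le hkr (by nlinarith)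
      exact_mod_cast this
    -- sv at index k is ≤ c'
    have hsvk : sv (C n) ⟨k, hklt⟩ ≤ c' := by
      by_contra hcon
      push_neg at hcon
      have hsub : Finset.Iic (⟨k, hklt⟩ : Fin n)
          ⊆ Finset.univ.filter fun j : Fin n => c' < sv (C n) j := by
        intro j hj
        rw [Finset.mem_Iic] at hj
        refine Finset.mem_filter.2 ⟨Finset.mem_univ _, ?_⟩
        exact lt_of_lt_of_le hcon (sv_antitone (C n) hj)
      have := Finset.card_le_card hsub
      rw [Fin.card_Iic] at this
      simp only [← hkdef] at this
      omega
    -- pA bound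
    have hpa : pA (C n) ≤ (k:ℝ)/n + c' := by
      have hbdd : BddBelow (Set.range fun i : Fin n => ((i:ℕ):ℝ)/n + sv (C n) i) := by
        refine ⟨0, ?_⟩
        rintro y ⟨i, rfl⟩
        exact add_nonneg (by positivity) (sv_nonneg _ _)
      calc pA (C n) ≤ ((⟨k, hklt⟩ : Fin n) : ℕ)/n + sv (C n) ⟨k, hklt⟩ :=
            ciInf_le hbdd ⟨k, hklt⟩
        _ ≤ (k:ℝ)/n + c' := by
            simp only []
            exact add_le_add le_rfl hsvk
    have hpa2 : pA (C n) ≤ 2 * r := by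
      have : (k:ℝ)/n < r := by
        rw [div_lt_iff₀ hn0]
        linarith [hkr]
      linarith [hc'r]
    exact ENNReal.ofReal_le_ofReal hpa2
  exact limsup_le_of_le (by isBoundedDefault) hfinal


lemma choose_r {ε : ℝ≥0∞} (hε : 0 < ε) :
    ∃ r : ℝ, 0 < r ∧ r ≤ 1 ∧ ENNReal.ofReal (3 * r) < ε := by
  set m := min ε 1 with hmdef
  have hm0 : 0 < m := lt_min hε zero_lt_one
  have hmne : m ≠ ⊤ := ne_of_lt (lt_of_le_of_lt (min_le_right _ _) (by norm_num))
  have hmR0 : 0 < m.toReal := ENNReal.toReal_pos (ne_of_gt hm0) hmne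
  have hmR1 : m.toReal ≤ 1 := by
    have : m.toReal ≤ (1 : ℝ≥0∞).toReal :=
      ENNReal.toReal_mono (by norm_num) (min_le_right _ _)
    simpa using this
  refine ⟨m.toReal / 4, by linarith, by linarith, ?_⟩
  calc ENNReal.ofReal (3 * (m.toReal / 4)) < ENNReal.ofReal m.toReal := by
        rw [ENNReal.ofReal_lt_ofReal_iff hmR0]; linarith
    _ = m := ENNReal.ofReal_toReal hmne
    _ ≤ ε := min_le_left _ _


/-- for a group `G` in `𝒞_D` and pairs `({B_{n,m}}_n, f_m) ∈ G`, the family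
`({B_{n,m}}_n)_m` is Cauchy for `d_acs` iff `(f_m)_m` is Cauchy for `d_m`. -/
theorem group_cauchy_iff_cauchy {d : ℕ} (D : Set (Fin d → ℝ))
    (hD : MeasurableSet D) (hD0 : 0 < volume D) (hDfin : volume D < ⊤)
    (G : Set (((n : ℕ) → Matrix (Fin n) (Fin n) ℂ) × ((Fin d → ℝ) → ℂ)))
    (hG : IsGroupIn D G)
    (B : ℕ → (n : ℕ) → Matrix (Fin n) (Fin n) ℂ) (f : ℕ → (Fin d → ℝ) → ℂ)
    (hBf : ∀ m, (B m, f m) ∈ G) :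
    (∀ ε : ℝ≥0∞, 0 < ε → ∃ M : ℕ, ∀ s t : ℕ, M ≤ s → M ≤ t → dacs (B s) (B t) < ε) ↔
      (∀ ε : ℝ≥0∞, 0 < ε → ∃ M : ℕ, ∀ s t : ℕ, M ≤ s → M ≤ t → dm D (f s) (f t) < ε) := by
  have hmemst : ∀ s t : ℕ,
      ((fun n => B s n - B t n), fun x => f s x - f t x) ∈ G := by
    intro s t
    have hneg := hG.2.2 (B t, f t) (hBf t)
    have hadd := hG.2.1 (B s, f s) (hBf s) _ hneg
    have e1 : (fun n => B s n - B t n) = fun n => B s n + -(B t n) := by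
      funext n; rw [sub_eq_add_neg]
    have e2 : (fun x => f s x - f t x) = f s + -(f t) := by
      funext x; simp [sub_eq_add_neg]
    rw [e1, e2]
    exact hadd
  constructor
  · intro hC ε hε
    obtain ⟨r, hr0, _hr1, h3r⟩ := choose_r hε
    obtain ⟨M, hM⟩ := hC (ENNReal.ofReal r) (ENNReal.ofReal_pos.2 hr0)
    refine ⟨M, fun s t hs ht => ?_⟩
    have hprop := hG.1 _ (hmemst s t)
    have hrho : rho (fun n => B s n - B t n) < ENNReal.ofReal r := hM s t hs ht
    exact lt_of_le_of_lt (lemA hD hD0 hDfin hprop.1 hprop.2 hr0 hrho) h3r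
  · intro hf ε hε
    obtain ⟨r, hr0, hr1, h3r⟩ := choose_r hε
    obtain ⟨M, hM⟩ := hf (ENNReal.ofReal r) (ENNReal.ofReal_pos.2 hr0)
    refine ⟨M, fun s t hs ht => ?_⟩
    have hprop := hG.1 _ (hmemst s t)
    have hpm : pm D (fun x => f s x - f t x) < ENNReal.ofReal r := hM s t hs ht
    calc dacs (B s) (B t) ≤ ENNReal.ofReal (2 * r) :=
          lemB hD hD0 hDfin hprop.1 hprop.2 hr0 hr1 hpm
      _ ≤ ENNReal.ofReal (3 * r) := ENNReal.ofReal_le_ofReal (by linarith)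
      _ < ε := h3r
end

section
/- Let G be a group in 𝒞_D containing all zero-distributed pairs ({C_n}, 0) with {C_n} ∼_σ 0, and assume that every measurable function k : D → ℂ is a symbol for G (for every measurable k there exists {A_n} ∈ 𝔈 with ({A_n},k) ∈ G). Then G is a maximal group in 𝒞_D with respect to inclusion: if N is any group in 𝒞_D with G ⊆ N, then N = G. -/
open MeasureTheory Filter
open scoped ENNReal NNReal

/-- if a group `G` in `𝒞_D` contains all zero-distributed pairs and every
measurable function is a symbol for `G`, then `G` is a maximal group in `𝒞_D`. -/
theorem group_is_maximal {d : ℕ} (D : Set (Fin d → ℝ))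
    (hD : MeasurableSet D) (hD0 : 0 < volume D) (hDfin : volume D < ⊤)
    (G : Set (((n : ℕ) → Matrix (Fin n) (Fin n) ℂ) × ((Fin d → ℝ) → ℂ)))
    (hG : IsGroupIn D G)
    (hZ : ∀ C : (n : ℕ) → Matrix (Fin n) (Fin n) ℂ,
      SpecSymb D C (fun _ => 0) → (C, fun _ => (0 : ℂ)) ∈ G)
    (hall : ∀ k : (Fin d → ℝ) → ℂ, Measurable k →
      ∃ A : (n : ℕ) → Matrix (Fin n) (Fin n) ℂ, (A, k) ∈ G) :
    ∀ N : Set (((n : ℕ) → Matrix (Fin n) (Fin n) ℂ) × ((Fin d → ℝ) → ℂ)),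
      IsGroupIn D N → G ⊆ N → N = G := by
  intro N hN hGN
  apply Set.Subset.antisymm _ hGN
  intro p hp
  obtain ⟨hmeas, _⟩ := hN.1 p hp
  obtain ⟨B, hB⟩ := hall p.2 hmeas
  have hBneg : ((fun n => -(B n)), -p.2) ∈ G := hG.2.2 (B, p.2) hB
  have hsum : ((fun n => p.1 n + -(B n)), p.2 + -p.2) ∈ N :=
    hN.2.1 p hp _ (hGN hBneg)
  have hzero : (p.2 + -p.2) = fun _ => (0 : ℂ) := by
    funext x; simp
  have hspec : SpecSymb D (fun n => p.1 n + -(B n)) (fun _ => (0 : ℂ)) := by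
    rw [← hzero]; exact (hN.1 _ hsum).2
  have hC : ((fun n => p.1 n + -(B n)), fun _ => (0 : ℂ)) ∈ G := hZ _ hspec
  have hfin := hG.2.1 _ hC (B, p.2) hB
  have : ((fun n => (p.1 n + -(B n)) + B n), (fun _ => (0 : ℂ)) + p.2) = p := by
    refine Prod.ext ?_ ?_
    · funext n; simp
    · funext x; simp
  rwa [this] at hfin
end
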